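/- Suppose |Yᵢ| ≤ k₁ almost surely for all i, and 1/pᵢ(e) ≤ k₂ for the exposure e. Then for units i ≠ j with P(dᵢ = e, dⱼ = e) > 0, Cov(1{dᵢ=e}εᵢ, 1{dⱼ=e}εⱼ) / (pᵢ(e)pⱼ(e)) ≤ 4k₁²k₂²·|Cov(1{dᵢ=e}, 1{dⱼ=e})| + ε̃ᵢⱼ(e,e)·ε̃ⱼᵢ(e,e) + Cov(ε̇ᵢⱼ, ε̇ⱼᵢ | dᵢ = e, dⱼ = e). -/

import Mathlib

open MeasureTheory ProbabilityTheory Real Finset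

/-- Covariance of two real random variables under a measure `P`. -/
noncomputable def cov {Ω : Type*} [MeasurableSpace Ω] (P : MeasureTheory.Measure Ω)
    (X Y : Ω → ℝ) : ℝ :=
  (∫ ω, X ω * Y ω ∂P) - (∫ ω, X ω ∂P) * ∫ ω, Y ω ∂P

/-- Covariance of two real random variables under the conditional measure `P(·|A)`. -/
noncomputable def condCov {Ω : Type*} [MeasurableSpace Ω] (P : MeasureTheory.Measure Ω)
    (A : Set Ω) (X Y : Ω → ℝ) : ℝ :=
  (∫ ω, X ω * Y ω ∂(P[|A])) - (∫ ω, X ω ∂(P[|A])) * ∫ ω, Y ω ∂(P[|A])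

lemma integral_cond_eq' {Ω : Type*} [MeasurableSpace Ω] (P : Measure Ω) (s : Set Ω) (f : Ω → ℝ) :
    ∫ ω, f ω ∂(P[|s]) = (P s).toReal⁻¹ * ∫ ω in s, f ω ∂P := by
  rw [ProbabilityTheory.cond, integral_smul_measure, smul_eq_mul, ENNReal.toReal_inv]

lemma ae_cond_of_ae' {Ω : Type*} [MeasurableSpace Ω] {P : Measure Ω} (s : Set Ω) {q : Ω → Prop}
    (h : ∀ᵐ ω ∂P, q ω) : ∀ᵐ ω ∂(P[|s]), q ω := by
  rw [ProbabilityTheory.cond]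
  exact Measure.ae_smul_measure (ae_restrict_of_ae h) _

lemma ae_cond_mem' {Ω : Type*} [MeasurableSpace Ω] {P : Measure Ω} {s : Set Ω}
    (hs : MeasurableSet s) : ∀ᵐ ω ∂(P[|s]), ω ∈ s := by
  rw [ProbabilityTheory.cond]
  exact Measure.ae_smul_measure (ae_restrict_mem hs) _

lemma integrable_of_bdd' {Ω : Type*} [MeasurableSpace Ω] {P : Measure Ω} [IsFiniteMeasure P]
    {f : Ω → ℝ} {C : ℝ} (hf : AEStronglyMeasurable f P) (h : ∀ᵐ ω ∂P, |f ω| ≤ C) :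
    Integrable f P :=
  ⟨hf, HasFiniteIntegral.of_bounded (C := C) (by simpa [Real.norm_eq_abs] using h)⟩

set_option maxHeartbeats 1000000 in
/-- For units `i ≠ j` and exposure `e` with positive joint assignment probability, if
`|Yᵢ| ≤ k₁` a.s. and `1/pᵢ(e) ≤ k₂`, then
`Cov(1{dᵢ=e}εᵢ, 1{dⱼ=e}εⱼ)/(pᵢ(e)pⱼ(e))
  ≤ 4k₁²k₂²·|Cov(1{dᵢ=e}, 1{dⱼ=e})| + ε̃ᵢⱼ(e,e)·ε̃ⱼᵢ(e,e) + Cov(ε̇ᵢⱼ, ε̇ⱼᵢ | dᵢ=e, dⱼ=e)`. -/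
theorem cov_indicator_specification_errors_bound
    {Ω : Type*} [MeasurableSpace Ω] (P : Measure Ω) [IsProbabilityMeasure P]
    {Δ : Type*} [Fintype Δ] [DecidableEq Δ] [MeasurableSpace Δ] [MeasurableSingletonClass Δ]
    (n : ℕ) (d : Fin n → Ω → Δ) (Y : Fin n → Ω → ℝ)
    (hd : ∀ i, Measurable (d i)) (hY : ∀ i, Measurable (Y i))
    (k₁ k₂ : ℝ) (hbdd : ∀ i, ∀ᵐ ω ∂P, |Y i ω| ≤ k₁)
    -- assignment probabilities `pᵢ(e) = P(dᵢ = e)`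
    (p : Fin n → Δ → ℝ) (hp : ∀ i e, p i e = (P {ω | d i ω = e}).toReal)
    -- conditional expected outcomes `ȳᵢ(e) = E[Yᵢ | dᵢ = e]` (zero for null events)
    (ybar : Fin n → Δ → ℝ)
    (hybar : ∀ i e, ybar i e = ∫ ω, Y i ω ∂(P[|{ω | d i ω = e}]))
    -- specification errors `εᵢ = Yᵢ − ȳᵢ(dᵢ)`
    (ε : Fin n → Ω → ℝ)
    (hε : ∀ i ω, ε i ω = Y i ω - ybar i (d i ω))
    -- pairwise conditional means `μ̄ᵢⱼ(e₁,e₂) = E[Yᵢ | dᵢ = e₁, dⱼ = e₂]`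
    (μbar : Fin n → Fin n → Δ → Δ → ℝ)
    (hμbar : ∀ i j e₁ e₂,
      μbar i j e₁ e₂ = ∫ ω, Y i ω ∂(P[|{ω | d i ω = e₁} ∩ {ω | d j ω = e₂}]))
    -- systematic part of the error: `ε̃ᵢⱼ(e₁,e₂) = μ̄ᵢⱼ(e₁,e₂) − ȳᵢ(e₁)`
    (εtilde : Fin n → Fin n → Δ → Δ → ℝ)
    (hεtilde : ∀ i j e₁ e₂, εtilde i j e₁ e₂ = μbar i j e₁ e₂ - ybar i e₁)
    -- idiosyncratic part of the error: `ε̇ᵢⱼ = Yᵢ − μ̄ᵢⱼ(dᵢ, dⱼ)`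
    (εdot : Fin n → Fin n → Ω → ℝ)
    (hεdot : ∀ i j ω, εdot i j ω = Y i ω - μbar i j (d i ω) (d j ω))
    (e : Δ) (hk₂ : ∀ i, 1 / p i e ≤ k₂)
    (i j : Fin n) (hij : i ≠ j)
    (hpos : 0 < P ({ω | d i ω = e} ∩ {ω | d j ω = e})) :
    cov P (fun ω => if d i ω = e then ε i ω else 0) (fun ω => if d j ω = e then ε j ω else 0)
        / (p i e * p j e)
      ≤ 4 * k₁ ^ 2 * k₂ ^ 2
            * |cov P (fun ω => if d i ω = e then (1 : ℝ) else 0)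
                (fun ω => if d j ω = e then (1 : ℝ) else 0)|
        + εtilde i j e e * εtilde j i e e
        + condCov P ({ω | d i ω = e} ∩ {ω | d j ω = e}) (εdot i j) (εdot j i) := by
  classical
  set A : Set Ω := {ω | d i ω = e} with hAdef
  set B : Set Ω := {ω | d j ω = e} with hBdef
  have hA : MeasurableSet A := hd i (measurableSet_singleton e)
  have hB : MeasurableSet B := hd j (measurableSet_singleton e)
  have hAB0 : P (A ∩ B) ≠ 0 := hpos.ne'
  have hA0 : P A ≠ 0 := fun h => hAB0 (measure_mono_null Set.inter_subset_left h)
  have hB0 : P B ≠ 0 := fun h => hAB0 (measure_mono_null Set.inter_subset_right h)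
  set a : ℝ := (P A).toReal with hadef
  set b : ℝ := (P B).toReal with hbdef
  set q : ℝ := (P (A ∩ B)).toReal with hqdef
  have ha : 0 < a := ENNReal.toReal_pos hA0 (measure_ne_top _ _)
  have hb : 0 < b := ENNReal.toReal_pos hB0 (measure_ne_top _ _)
  have hq : 0 < q := ENNReal.toReal_pos hAB0 (measure_ne_top _ _)
  have hpa : p i e = a := hp i e
  have hpb : p j e = b := hp j e
  have hk₁0 : 0 ≤ k₁ := by
    obtain ⟨ω, hω⟩ := (hbdd i).exists
    exact (abs_nonneg _).trans hω
  -- conditional measures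
  set P' : Measure Ω := P[|A ∩ B] with hP'def
  haveI : IsProbabilityMeasure P' := cond_isProbabilityMeasure hAB0
  haveI : IsProbabilityMeasure (P[|A]) := cond_isProbabilityMeasure hA0
  haveI : IsProbabilityMeasure (P[|B]) := cond_isProbabilityMeasure hB0
  -- bounds on conditional means
  have hcondbound : ∀ (m : Fin n) (s : Set Ω), P s ≠ 0 → |∫ ω, Y m ω ∂(P[|s])| ≤ k₁ := by
    intro m s hs
    haveI : IsProbabilityMeasure (P[|s]) := cond_isProbabilityMeasure hs
    have hbnd : ∀ᵐ ω ∂(P[|s]), ‖Y m ω‖ ≤ k₁ := by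
      simpa [Real.norm_eq_abs] using ae_cond_of_ae' s (hbdd m)
    calc |∫ ω, Y m ω ∂(P[|s])| = ‖∫ ω, Y m ω ∂(P[|s])‖ := (Real.norm_eq_abs _).symm
    _ ≤ k₁ * ((P[|s]) Set.univ).toReal := norm_integral_le_of_norm_le_const hbnd
    _ = k₁ := by simp
  set c₁ : ℝ := ybar i e with hc₁def
  set c₂ : ℝ := ybar j e with hc₂def
  set m₁ : ℝ := μbar i j e e with hm₁def
  set m₂ : ℝ := μbar j i e e with hm₂def
  have hc₁ : |c₁| ≤ k₁ := by rw [hc₁def, hybar]; exact hcondbound i A hA0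
  have hc₂ : |c₂| ≤ k₁ := by rw [hc₂def, hybar]; exact hcondbound j B hB0
  have hm₁P' : m₁ = ∫ ω, Y i ω ∂P' := hμbar i j e e
  have hm₂P' : m₂ = ∫ ω, Y j ω ∂P' := by
    rw [hm₂def, hμbar j i e e, hP'def, Set.inter_comm]
  -- a.e. facts under P'
  have haeA : ∀ᵐ ω ∂P', d i ω = e := by
    filter_upwards [ae_cond_mem' (hA.inter hB)] with ω hω using hω.1
  have haeB : ∀ᵐ ω ∂P', d j ω = e := by
    filter_upwards [ae_cond_mem' (hA.inter hB)] with ω hω using hω.2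
  have haeYi : ∀ᵐ ω ∂P', |Y i ω| ≤ k₁ := ae_cond_of_ae' _ (hbdd i)
  have haeYj : ∀ᵐ ω ∂P', |Y j ω| ≤ k₁ := ae_cond_of_ae' _ (hbdd j)
  -- integrability under P'
  have hintYi : Integrable (Y i) P' := integrable_of_bdd' (hY i).aestronglyMeasurable haeYi
  have hintYj : Integrable (Y j) P' := integrable_of_bdd' (hY j).aestronglyMeasurable haeYj
  have hint1 : ∀ (c : ℝ), Integrable (fun ω => Y i ω - c) P' := fun c => hintYi.sub (integrable_const c)
  have hint2 : ∀ (c : ℝ), Integrable (fun ω => Y j ω - c) P' := fun c => hintYj.sub (integrable_const c)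
  have hintprod : ∀ (u v : ℝ), Integrable (fun ω => (Y i ω - u) * (Y j ω - v)) P' := by
    intro u v
    refine integrable_of_bdd' (((hY i).sub measurable_const).mul
      ((hY j).sub measurable_const)).aestronglyMeasurable
      (C := (k₁ + |u|) * (k₁ + |v|)) ?_
    filter_upwards [haeYi, haeYj] with ω h1 h2
    rw [abs_mul]
    gcongr
    · exact (abs_sub _ _).trans (by linarith)
    · exact (abs_sub _ _).trans (by linarith)
  -- zero-mean of idiosyncratic errors under P'
  have hdot1 : (εdot i j) =ᵐ[P'] fun ω => Y i ω - m₁ := by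
    filter_upwards [haeA, haeB] with ω h1 h2
    rw [hεdot, h1, h2]
  have hdot2 : (εdot j i) =ᵐ[P'] fun ω => Y j ω - m₂ := by
    filter_upwards [haeA, haeB] with ω h1 h2
    rw [hεdot, h1, h2]
  have hmean1 : ∫ ω, εdot i j ω ∂P' = 0 := by
    rw [integral_congr_ae hdot1, integral_sub hintYi (integrable_const _),
      integral_const, hm₁P']
    simp
  have hmean2 : ∫ ω, εdot j i ω ∂P' = 0 := by
    rw [integral_congr_ae hdot2, integral_sub hintYj (integrable_const _),
      integral_const, hm₂P']
    simp
  have hmean1' : ∫ ω, (Y i ω - m₁) ∂P' = 0 := by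
    rw [← integral_congr_ae hdot1]; exact hmean1
  have hmean2' : ∫ ω, (Y j ω - m₂) ∂P' = 0 := by
    rw [← integral_congr_ae hdot2]; exact hmean2
  -- condCov identification
  have hCC : condCov P (A ∩ B) (εdot i j) (εdot j i)
      = ∫ ω, (Y i ω - m₁) * (Y j ω - m₂) ∂P' := by
    rw [condCov, ← hP'def, hmean1, hmean2]
    rw [integral_congr_ae (show (fun ω => εdot i j ω * εdot j i ω) =ᵐ[P'] fun ω => (Y i ω - m₁) * (Y j ω - m₂) from Filter.EventuallyEq.mul hdot1 hdot2)]
    ring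
  -- key decomposition of the target integral M
  set M : ℝ := ∫ ω, (Y i ω - c₁) * (Y j ω - c₂) ∂P' with hMdef
  have ht₁ : εtilde i j e e = m₁ - c₁ := hεtilde i j e e
  have ht₂ : εtilde j i e e = m₂ - c₂ := hεtilde j i e e
  have hMsplit : M = condCov P (A ∩ B) (εdot i j) (εdot j i)
      + εtilde i j e e * εtilde j i e e := by
    rw [hCC, ht₁, ht₂]
    have I3 : Integrable (fun ω => (m₂ - c₂) * (Y i ω - m₁) + (m₁ - c₁) * (m₂ - c₂)) P' :=
      ((hint1 m₁).const_mul (m₂ - c₂)).add (integrable_const _)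
    have I2 : Integrable (fun ω => (m₁ - c₁) * (Y j ω - m₂)
        + ((m₂ - c₂) * (Y i ω - m₁) + (m₁ - c₁) * (m₂ - c₂))) P' :=
      ((hint2 m₂).const_mul (m₁ - c₁)).add I3
    have hpt : M = ∫ ω, ((Y i ω - m₁) * (Y j ω - m₂) + ((m₁ - c₁) * (Y j ω - m₂)
        + ((m₂ - c₂) * (Y i ω - m₁) + (m₁ - c₁) * (m₂ - c₂)))) ∂P' := by
      rw [hMdef]
      refine integral_congr_ae (Filter.Eventually.of_forall fun ω => ?_)
      ring
    rw [hpt]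
    simp only [integral_add (hintprod m₁ m₂) I2,
      integral_add ((hint2 m₂).const_mul (m₁ - c₁)) I3,
      integral_add ((hint1 m₁).const_mul (m₂ - c₂))
        (integrable_const ((m₁ - c₁) * (m₂ - c₂))),
      integral_const_mul]
    rw [hmean1', hmean2', integral_const]
    simp
  -- bound on |M|
  have hMbound : |M| ≤ 4 * k₁ ^ 2 := by
    have hbnd : ∀ᵐ ω ∂P', ‖(Y i ω - c₁) * (Y j ω - c₂)‖ ≤ 4 * k₁ ^ 2 := by
      filter_upwards [haeYi, haeYj] with ω h1 h2
      rw [Real.norm_eq_abs, abs_mul]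
      have e1 : |Y i ω - c₁| ≤ 2 * k₁ := (abs_sub _ _).trans (by linarith)
      have e2 : |Y j ω - c₂| ≤ 2 * k₁ := (abs_sub _ _).trans (by linarith)
      calc |Y i ω - c₁| * |Y j ω - c₂| ≤ (2 * k₁) * (2 * k₁) :=
        mul_le_mul e1 e2 (abs_nonneg _) (by linarith)
      _ = 4 * k₁ ^ 2 := by ring
    calc |M| = ‖∫ ω, (Y i ω - c₁) * (Y j ω - c₂) ∂P'‖ := (Real.norm_eq_abs _).symm
    _ ≤ 4 * k₁ ^ 2 * ((P' Set.univ).toReal) := norm_integral_le_of_norm_le_const hbnd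
    _ = 4 * k₁ ^ 2 := by simp
  -- compute cov of the indicator-weighted errors
  have hIA : ∫ ω in A, Y i ω ∂P = a * c₁ := by
    have := integral_cond_eq' P A (Y i)
    rw [hc₁def, hybar, this]
    rw [← hadef]
    field_simp
  have hmeanf : ∫ ω, (if d i ω = e then ε i ω else 0) ∂P = 0 := by
    have hf : (fun ω => if d i ω = e then ε i ω else 0)
        = Set.indicator A (fun ω => Y i ω - c₁) := by
      funext ω
      by_cases h : d i ω = e
      · simp only [Set.indicator, hAdef, Set.mem_setOf_eq, h, if_true]
        rw [hε, h]
      · simp [Set.indicator, hAdef, h]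
    have hYiP : Integrable (Y i) P := integrable_of_bdd' (hY i).aestronglyMeasurable (hbdd i)
    rw [hf, integral_indicator hA,
      integral_sub hYiP.integrableOn (integrableOn_const (measure_ne_top _ _)),
      hIA, setIntegral_const]
    rw [Measure.real_def, ← hadef, smul_eq_mul]
    ring
  have hcovfg : cov P (fun ω => if d i ω = e then ε i ω else 0)
      (fun ω => if d j ω = e then ε j ω else 0) = q * M := by
    have hfg : (fun ω => (if d i ω = e then ε i ω else 0) * (if d j ω = e then ε j ω else 0))
        = Set.indicator (A ∩ B) (fun ω => (Y i ω - c₁) * (Y j ω - c₂)) := by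
      funext ω
      by_cases h1 : d i ω = e <;> by_cases h2 : d j ω = e
      · simp only [Set.indicator, hAdef, hBdef, Set.mem_inter_iff, Set.mem_setOf_eq, h1, h2,
          if_true, and_self]
        rw [hε, hε, h1, h2]
      all_goals simp [Set.indicator, hAdef, hBdef, h1, h2]
    rw [cov, hmeanf, hfg, integral_indicator (hA.inter hB)]
    have hthis := integral_cond_eq' P (A ∩ B) (fun ω => (Y i ω - c₁) * (Y j ω - c₂))
    rw [← hP'def, ← hMdef, ← hqdef] at hthis
    have h2 : ∫ ω in A ∩ B, (Y i ω - c₁) * (Y j ω - c₂) ∂P = q * M := by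
      rw [hthis]
      field_simp
    rw [h2]
    ring
  -- compute cov of the indicators
  have hcovind : cov P (fun ω => if d i ω = e then (1 : ℝ) else 0)
      (fun ω => if d j ω = e then (1 : ℝ) else 0) = q - a * b := by
    have h1 : (fun ω => (if d i ω = e then (1:ℝ) else 0) * (if d j ω = e then (1:ℝ) else 0))
        = Set.indicator (A ∩ B) (1 : Ω → ℝ) := by
      funext ω
      by_cases h1 : d i ω = e <;> by_cases h2 : d j ω = e <;>
        simp [Set.indicator, hAdef, hBdef, h1, h2]
    have h2 : (fun ω => (if d i ω = e then (1:ℝ) else 0)) = Set.indicator A (1 : Ω → ℝ) := by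
      funext ω; by_cases h : d i ω = e <;> simp [Set.indicator, hAdef, h]
    have h3 : (fun ω => (if d j ω = e then (1:ℝ) else 0)) = Set.indicator B (1 : Ω → ℝ) := by
      funext ω; by_cases h : d j ω = e <;> simp [Set.indicator, hBdef, h]
    rw [cov, h1, h2, h3, integral_indicator_one (hA.inter hB), integral_indicator_one hA,
      integral_indicator_one hB]
    rfl
  -- final algebra
  rw [hcovfg, hcovind, hpa, hpb]
  have hMsplit' : εtilde i j e e * εtilde j i e e
      + condCov P (A ∩ B) (εdot i j) (εdot j i) = M := by
    rw [hMsplit]; ring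
  rw [add_assoc, hMsplit']
  have hk2a : 1 / a ≤ k₂ := by rw [← hpa]; exact hk₂ i
  have hk2b : 1 / b ≤ k₂ := by rw [← hpb]; exact hk₂ j
  have habk : 1 ≤ a * b * k₂ ^ 2 := by
    have h1 : 1 / a > 0 := by positivity
    have h2 : 1 / b > 0 := by positivity
    have h3 : (1 / a) * (1 / b) ≤ k₂ * k₂ := mul_le_mul hk2a hk2b (le_of_lt h2) (h1.le.trans hk2a)
    rw [div_mul_div_comm, one_mul] at h3
    rw [div_le_iff₀ (by positivity)] at h3
    nlinarith
  have h1 : (q - a * b) * M ≤ |q - a * b| * (4 * k₁ ^ 2) :=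
    (le_abs_self _).trans (by rw [abs_mul]; exact mul_le_mul_of_nonneg_left hMbound (abs_nonneg _))
  have h3 : |q - a * b| * (4 * k₁ ^ 2) ≤ |q - a * b| * (4 * k₁ ^ 2) * (a * b * k₂ ^ 2) :=
    le_mul_of_one_le_right (by positivity) habk
  rw [div_le_iff₀ (mul_pos ha hb)]
  nlinarith [h1, h3]
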